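/- For every even r ≥ 4, there exists a simple bipartite planar graph in which one part has 5r vertices all of degree 3 and the other part has 3r vertices all of degree 5. -/

import Mathlib

/-- A topological plane embedding (drawing) of a simple graph: vertices are points
of the plane, edges are injective continuous arcs meeting only at common endpoints. -/
structure PlaneEmb {V : Type} (G : SimpleGraph V) where
  pos : V → ℝ × ℝ
  pos_inj : Function.Injective pos
  arc : ∀ ⦃u v : V⦄, G.Adj u v → unitInterval → ℝ × ℝ
  arc_cont : ∀ ⦃u v : V⦄ (h : G.Adj u v), Continuous (arc h)
  arc_inj : ∀ ⦃u v : V⦄ (h : G.Adj u v), Function.Injective (arc h)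
  arc_zero : ∀ ⦃u v : V⦄ (h : G.Adj u v), arc h 0 = pos u
  arc_one : ∀ ⦃u v : V⦄ (h : G.Adj u v), arc h 1 = pos v
  arc_symm : ∀ ⦃u v : V⦄ (h : G.Adj u v) (t : unitInterval),
    arc h.symm (unitInterval.symm t) = arc h t
  arc_vertex : ∀ ⦃u v : V⦄ (h : G.Adj u v) (t : unitInterval),
    (∃ w, arc h t = pos w) → t = 0 ∨ t = 1
  arc_disj : ∀ ⦃u v x y : V⦄ (h : G.Adj u v) (h' : G.Adj x y),
    s(u, v) ≠ s(x, y) → ∀ t₁ t₂ : unitInterval, arc h t₁ = arc h' t₂ → ∃ w, arc h t₁ = pos w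

/-- The pair `(a^p | b^q)` is planar graphic: there is a simple bipartite planar graph
one of whose parts has `p` vertices, all of degree `a`, and the other part has `q`
vertices, all of degree `b`. -/
def PlanarPair (a p b q : ℕ) : Prop :=
  ∃ (V : Type) (_ : Finite V) (G : SimpleGraph V) (A B : Set V),
    Disjoint A B ∧ A ∪ B = Set.univ ∧ A.ncard = p ∧ B.ncard = q ∧
    (∀ ⦃u v⦄, G.Adj u v → ((u ∈ A ∧ v ∈ B) ∨ (u ∈ B ∧ v ∈ A))) ∧
    (∀ v ∈ A, (G.neighborSet v).ncard = a) ∧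
    (∀ v ∈ B, (G.neighborSet v).ncard = b) ∧
    Nonempty (PlaneEmb G)


namespace PlanarAux

/-- Integer orientation determinant. -/
def detZ (a b c : ℤ × ℤ) : ℤ := (b.1-a.1)*(c.2-a.2)-(b.2-a.2)*(c.1-a.1)

/-- Real orientation determinant. -/
def detR (a b c : ℝ × ℝ) : ℝ := (b.1-a.1)*(c.2-a.2)-(b.2-a.2)*(c.1-a.1)

/-- Straight segment parametrization. -/
def seg (P Q : ℝ × ℝ) (t : ℝ) : ℝ × ℝ := (P.1 + t*(Q.1-P.1), P.2 + t*(Q.2-P.2))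

def castPt (z : ℤ × ℤ) : ℝ × ℝ := ((z.1 : ℝ), (z.2 : ℝ))

theorem detR_cast (a b c : ℤ × ℤ) :
    detR (castPt a) (castPt b) (castPt c) = (detZ a b c : ℝ) := by
  simp only [detR, detZ, castPt]; push_cast; ring

theorem castPt_inj : Function.Injective castPt := by
  intro a b h
  simp only [castPt, Prod.mk.injEq, Int.cast_inj] at h
  exact Prod.ext h.1 h.2

theorem detR_seg (X Y P Q : ℝ × ℝ) (t : ℝ) :
    detR X Y (seg P Q t) = (1-t) * detR X Y P + t * detR X Y Q := by
  simp only [detR, seg]; ring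

theorem detR_self₁ (X Y : ℝ × ℝ) : detR X Y X = 0 := by simp only [detR]; ring
theorem detR_self₂ (X Y : ℝ × ℝ) : detR X Y Y = 0 := by simp only [detR]; ring

theorem detR_swap (X Y C : ℝ × ℝ) : detR Y X C = - detR X Y C := by
  simp only [detR]; ring

theorem detR_seg_self (X Y : ℝ × ℝ) (t : ℝ) : detR X Y (seg X Y t) = 0 := by
  rw [detR_seg, detR_self₁, detR_self₂]; ring

theorem seg_zero (P Q : ℝ × ℝ) : seg P Q 0 = P := by simp [seg]
theorem seg_one (P Q : ℝ × ℝ) : seg P Q 1 = Q := by simp [seg]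

theorem seg_symm (P Q : ℝ × ℝ) (t : ℝ) : seg Q P (1-t) = seg P Q t := by
  simp only [seg, Prod.mk.injEq]; constructor <;> ring

theorem convex_ne (d₁ d₂ t : ℝ) (h : 0 < d₁ * d₂) (h0 : 0 ≤ t) (h1 : t ≤ 1) :
    (1-t) * d₁ + t * d₂ ≠ 0 := by
  intro heq
  rcases mul_pos_iff.mp h with ⟨hp₁, hp₂⟩ | ⟨hn₁, hn₂⟩
  · have hm : 0 < min d₁ d₂ := lt_min hp₁ hp₂
    have h2 : min d₁ d₂ ≤ (1-t) * d₁ + t * d₂ := by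
      nlinarith [min_le_left d₁ d₂, min_le_right d₁ d₂]
    linarith
  · have hm : max d₁ d₂ < 0 := max_lt hn₁ hn₂
    have h2 : (1-t) * d₁ + t * d₂ ≤ max d₁ d₂ := by
      nlinarith [le_max_left d₁ d₂, le_max_right d₁ d₂]
    linarith

theorem seg_inj (P Q : ℝ × ℝ) (hne : P ≠ Q) {t₁ t₂ : ℝ}
    (h : seg P Q t₁ = seg P Q t₂) : t₁ = t₂ := by
  simp only [seg, Prod.mk.injEq] at h
  obtain ⟨h1, h2⟩ := h
  have c1 : (t₁ - t₂) * (Q.1 - P.1) = 0 := by linarith [h1]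
  have c2 : (t₁ - t₂) * (Q.2 - P.2) = 0 := by linarith [h2]
  by_contra hne'
  have ht : t₁ - t₂ ≠ 0 := sub_ne_zero.mpr hne'
  have e1 : Q.1 - P.1 = 0 := (mul_eq_zero.mp c1).resolve_left ht
  have e2 : Q.2 - P.2 = 0 := (mul_eq_zero.mp c2).resolve_left ht
  exact hne (Prod.ext (by linarith) (by linarith)).symm

theorem seg_eq_left (P Q : ℝ × ℝ) (hne : P ≠ Q) {t : ℝ}
    (h : seg P Q t = P) : t = 0 := by
  apply seg_inj P Q hne; rw [h, seg_zero]

theorem seg_eq_right (P Q : ℝ × ℝ) (hne : P ≠ Q) {t : ℝ}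
    (h : seg P Q t = Q) : t = 1 := by
  apply seg_inj P Q hne; rw [h, seg_one]

end PlanarAux
namespace PlanarAux

section Build

variable {n p : ℕ} {edges : List (ℕ × ℕ)} {c : ℕ → ℤ × ℤ}

/-- positions of vertices -/
def bpos (c : ℕ → ℤ × ℤ) (v : Fin n) : ℝ × ℝ := castPt (c v.val)

theorem key
    (hE : ∀ e ∈ edges, e.1 < p ∧ p ≤ e.2 ∧ e.2 < n)
    (hgen : ∀ e ∈ edges, ∀ w : Fin n, w.val ≠ e.1 → w.val ≠ e.2 →
        detZ (c e.1) (c e.2) (c w.val) ≠ 0)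
    (hside : ∀ e ∈ edges, ∀ f ∈ edges, e.1 ≠ f.1 → e.2 ≠ f.2 →
        0 < detZ (c e.1) (c e.2) (c f.1) * detZ (c e.1) (c e.2) (c f.2) ∨
        0 < detZ (c f.1) (c f.2) (c e.1) * detZ (c f.1) (c f.2) (c e.2))
    (a b a' b' : Fin n)
    (hab : (a.val, b.val) ∈ edges) (hab' : (a'.val, b'.val) ∈ edges)
    (hne : ¬(a = a' ∧ b = b'))
    (s₁ s₂ : ℝ) (hs₁0 : 0 ≤ s₁) (hs₁1 : s₁ ≤ 1) (hs₂0 : 0 ≤ s₂) (hs₂1 : s₂ ≤ 1)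
    (heq : seg (bpos c a) (bpos c b) s₁ = seg (bpos c a') (bpos c b') s₂) :
    ∃ w : Fin n, seg (bpos c a) (bpos c b) s₁ = bpos c w := by
  obtain ⟨hap, hbp, hbn⟩ := hE _ hab
  obtain ⟨hap', hbp', hbn'⟩ := hE _ hab'
  by_cases haa : a = a'
  · -- shared A endpoint; common point must be `bpos c a`
    have hbb : b ≠ b' := fun hb => hne ⟨haa, hb⟩
    have hD : detZ (c a'.val) (c b'.val) (c b.val) ≠ 0 := by
      refine hgen _ hab' b (by omega) (fun hc => hbb (Fin.ext hc))
    have hDR : detR (bpos c a') (bpos c b') (bpos c b) ≠ 0 := by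
      rw [bpos, bpos, bpos, detR_cast]
      exact_mod_cast hD
    have h0 : detR (bpos c a') (bpos c b') (seg (bpos c a) (bpos c b) s₁) = 0 := by
      rw [heq]; exact detR_seg_self _ _ _
    rw [detR_seg, haa, detR_self₁] at h0
    have hs : s₁ = 0 := by
      rcases mul_eq_zero.mp (by linarith : s₁ * detR (bpos c a') (bpos c b') (bpos c b) = 0)
        with h | h
      · exact h
      · exact absurd h hDR
    exact ⟨a, by rw [hs, seg_zero]⟩
  · by_cases hbb : b = b'
    · -- shared B endpoint; common point must be `bpos c b`
      have hD : detZ (c a'.val) (c b'.val) (c a.val) ≠ 0 := by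
        refine hgen _ hab' a (fun hc => haa (Fin.ext hc)) (by omega)
      have hDR : detR (bpos c a') (bpos c b') (bpos c a) ≠ 0 := by
        rw [bpos, bpos, bpos, detR_cast]
        exact_mod_cast hD
      have h0 : detR (bpos c a') (bpos c b') (seg (bpos c a) (bpos c b) s₁) = 0 := by
        rw [heq]; exact detR_seg_self _ _ _
      rw [detR_seg, hbb, detR_self₂] at h0
      have hs : s₁ = 1 := by
        have h1 : (1 - s₁) * detR (bpos c a') (bpos c b') (bpos c a) = 0 := by linarith
        rcases mul_eq_zero.mp h1 with h | h
        · linarith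
        · exact absurd h hDR
      exact ⟨b, by rw [hs, seg_one]⟩
    · -- disjoint edges: contradiction
      exfalso
      have hne1 : (a.val, b.val).1 ≠ (a'.val, b'.val).1 := fun hc => haa (Fin.ext hc)
      have hne2 : (a.val, b.val).2 ≠ (a'.val, b'.val).2 := fun hc => hbb (Fin.ext hc)
      rcases hside _ hab _ hab' hne1 hne2 with hpr | hpr
      · have hprR : 0 < detR (bpos c a) (bpos c b) (bpos c a') *
            detR (bpos c a) (bpos c b) (bpos c b') := by
          rw [bpos, bpos, bpos, bpos, detR_cast, detR_cast]
          exact_mod_cast hpr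
        have hz : detR (bpos c a) (bpos c b) (seg (bpos c a') (bpos c b') s₂) ≠ 0 := by
          rw [detR_seg]; exact convex_ne _ _ _ hprR hs₂0 hs₂1
        rw [← heq] at hz
        exact hz (detR_seg_self _ _ _)
      · have hprR : 0 < detR (bpos c a') (bpos c b') (bpos c a) *
            detR (bpos c a') (bpos c b') (bpos c b) := by
          rw [bpos, bpos, bpos, bpos, detR_cast, detR_cast]
          exact_mod_cast hpr
        have hz : detR (bpos c a') (bpos c b') (seg (bpos c a) (bpos c b) s₁) ≠ 0 := by
          rw [detR_seg]; exact convex_ne _ _ _ hprR hs₁0 hs₁1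
        rw [heq] at hz
        exact hz (detR_seg_self _ _ _)

end Build

end PlanarAux
namespace PlanarAux

theorem build (n p q : ℕ) (c : ℕ → ℤ × ℤ)
    (edgesD : List ((ℕ × ℕ) × ((ℤ × ℤ) × (ℤ × ℤ))))
    (verts : List (ℕ × (ℤ × ℤ)))
    (hpq : p + q = n)
    (hEc : ∀ ed ∈ edgesD, ed.2.1 = c ed.1.1 ∧ ed.2.2 = c ed.1.2)
    (hV : verts = (List.range n).map (fun i => (i, c i)))
    (hED : ∀ ed ∈ edgesD, ed.1.1 < p ∧ p ≤ ed.1.2 ∧ ed.1.2 < n)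
    (hnd : (edgesD.map Prod.fst).Nodup)
    (hinjL : ∀ x ∈ verts, ∀ y ∈ verts, x.2 = y.2 → x.1 = y.1)
    (hdegA : ∀ i ∈ List.range p, edgesD.countP (fun ed => ed.1.1 == i) = 3)
    (hdegB : ∀ i ∈ List.range n, p ≤ i → edgesD.countP (fun ed => ed.1.2 == i) = 5)
    (hgenD : ∀ ed ∈ edgesD, ∀ x ∈ verts, x.1 ≠ ed.1.1 → x.1 ≠ ed.1.2 →
        detZ ed.2.1 ed.2.2 x.2 ≠ 0)
    (hsideD : ∀ ed ∈ edgesD, ∀ fd ∈ edgesD, ed.1.1 ≠ fd.1.1 → ed.1.2 ≠ fd.1.2 →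
        0 < detZ ed.2.1 ed.2.2 fd.2.1 * detZ ed.2.1 ed.2.2 fd.2.2 ∨
        0 < detZ fd.2.1 fd.2.2 ed.2.1 * detZ fd.2.1 fd.2.2 ed.2.2) :
    PlanarPair 3 p 5 q := by
  classical
  set L : List (ℕ × ℕ) := edgesD.map Prod.fst with hLdef
  have hvmem : ∀ w : Fin n, (w.val, c w.val) ∈ verts := by
    intro w
    rw [hV]
    exact List.mem_map.mpr ⟨w.val, List.mem_range.mpr w.isLt, rfl⟩
  -- translated hypotheses
  have hE : ∀ e ∈ L, e.1 < p ∧ p ≤ e.2 ∧ e.2 < n := by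
    intro e he
    obtain ⟨ed, hed, rfl⟩ := List.mem_map.mp he
    exact hED ed hed
  have hgen : ∀ e ∈ L, ∀ w : Fin n, w.val ≠ e.1 → w.val ≠ e.2 →
      detZ (c e.1) (c e.2) (c w.val) ≠ 0 := by
    intro e he w h1 h2
    obtain ⟨ed, hed, rfl⟩ := List.mem_map.mp he
    obtain ⟨hc1, hc2⟩ := hEc ed hed
    have := hgenD ed hed _ (hvmem w) h1 h2
    rwa [hc1, hc2] at this
  have hside : ∀ e ∈ L, ∀ f ∈ L, e.1 ≠ f.1 → e.2 ≠ f.2 →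
      0 < detZ (c e.1) (c e.2) (c f.1) * detZ (c e.1) (c e.2) (c f.2) ∨
      0 < detZ (c f.1) (c f.2) (c e.1) * detZ (c f.1) (c f.2) (c e.2) := by
    intro e he f hf h1 h2
    obtain ⟨ed, hed, rfl⟩ := List.mem_map.mp he
    obtain ⟨fd, hfd, rfl⟩ := List.mem_map.mp hf
    obtain ⟨hc1, hc2⟩ := hEc ed hed
    obtain ⟨hd1, hd2⟩ := hEc fd hfd
    have := hsideD ed hed fd hfd h1 h2
    rwa [hc1, hc2, hd1, hd2] at this
  have hinj : ∀ v w : Fin n, c v.val = c w.val → v = w := by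
    intro v w h
    exact Fin.ext (hinjL _ (hvmem v) _ (hvmem w) h)
  set R : Fin n → Fin n → Prop := fun v w => (v.val, w.val) ∈ L with hR
  set G : SimpleGraph (Fin n) := SimpleGraph.fromRel R with hG
  have hAdj : ∀ u v : Fin n, G.Adj u v ↔ u ≠ v ∧ (R u v ∨ R v u) := by
    intro u v; rw [hG]; exact SimpleGraph.fromRel_adj R u v
  have hposinj : Function.Injective (bpos c (n := n)) := fun v w h => hinj v w (castPt_inj h)
  have hposne : ∀ {u v : Fin n}, u ≠ v → bpos c u ≠ bpos c v :=
    fun h hc => h (hposinj hc)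
  have hNS : ∀ v : Fin n, G.neighborSet v =
      {w : Fin n | (v.val, w.val) ∈ L ∨ (w.val, v.val) ∈ L} := by
    intro v
    ext w
    simp only [SimpleGraph.mem_neighborSet, Set.mem_setOf_eq, hAdj]
    constructor
    · rintro ⟨-, h⟩; exact h
    · intro h
      refine ⟨?_, h⟩
      rcases h with hm | hm
      · obtain ⟨h1, h2, -⟩ := hE _ hm
        intro hvw; rw [hvw] at h1; omega
      · obtain ⟨h1, h2, -⟩ := hE _ hm
        intro hvw; rw [hvw] at h2; omega
  -- degree computation
  have hcard : ∀ v : Fin n, (G.neighborSet v).ncard = if v.val < p then 3 else 5 := by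
    intro v
    by_cases hv : v.val < p
    · rw [if_pos hv]
      have hNS' : G.neighborSet v = {w : Fin n | (v.val, w.val) ∈ L} := by
        rw [hNS v]
        ext w
        simp only [Set.mem_setOf_eq]
        constructor
        · rintro (h | h)
          · exact h
          · obtain ⟨-, h2, -⟩ := hE _ h
            omega
        · exact Or.inl
      rw [hNS', Set.ncard_eq_toFinset_card', Set.toFinset_setOf]
      have hbij : (Finset.univ.filter (fun w : Fin n => (v.val, w.val) ∈ L)).card
          = (L.filter (fun e => e.1 == v.val)).toFinset.card := by
        apply Finset.card_bij (fun w _ => (v.val, w.val))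
        · intro w hw
          rw [List.mem_toFinset, List.mem_filter]
          refine ⟨(Finset.mem_filter.mp hw).2, by simp⟩
        · intro w₁ h₁ w₂ h₂ hww
          exact Fin.ext (by simpa using congrArg Prod.snd hww)
        · intro e he
          rw [List.mem_toFinset, List.mem_filter] at he
          obtain ⟨heL, he1⟩ := he
          have he1' : e.1 = v.val := by simpa using he1
          obtain ⟨-, -, h3⟩ := hE _ heL
          refine ⟨⟨e.2, h3⟩, ?_, ?_⟩
          · rw [Finset.mem_filter]
            refine ⟨Finset.mem_univ _, ?_⟩
            simpa [← he1'] using heL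
          · simp [← he1']
      rw [hbij, List.toFinset_card_of_nodup (hnd.filter _),
        ← List.countP_eq_length_filter]
      have hcnt : L.countP (fun e => e.1 == v.val)
          = edgesD.countP (fun ed => ed.1.1 == v.val) := by
        rw [hLdef, List.countP_map]
        rfl
      rw [hcnt]
      exact hdegA v.val (List.mem_range.mpr hv)
    · rw [if_neg hv]
      push_neg at hv
      have hNS' : G.neighborSet v = {w : Fin n | (w.val, v.val) ∈ L} := by
        rw [hNS v]
        ext w
        simp only [Set.mem_setOf_eq]
        constructor
        · rintro (h | h)
          · obtain ⟨h1, -, -⟩ := hE _ h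
            omega
          · exact h
        · exact Or.inr
      rw [hNS', Set.ncard_eq_toFinset_card', Set.toFinset_setOf]
      have hbij : (Finset.univ.filter (fun w : Fin n => (w.val, v.val) ∈ L)).card
          = (L.filter (fun e => e.2 == v.val)).toFinset.card := by
        apply Finset.card_bij (fun w _ => (w.val, v.val))
        · intro w hw
          rw [List.mem_toFinset, List.mem_filter]
          refine ⟨(Finset.mem_filter.mp hw).2, by simp⟩
        · intro w₁ h₁ w₂ h₂ hww
          exact Fin.ext (by simpa using congrArg Prod.fst hww)
        · intro e he
          rw [List.mem_toFinset, List.mem_filter] at he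
          obtain ⟨heL, he2⟩ := he
          have he2' : e.2 = v.val := by simpa using he2
          obtain ⟨h1, -, -⟩ := hE _ heL
          refine ⟨⟨e.1, by omega⟩, ?_, ?_⟩
          · rw [Finset.mem_filter]
            refine ⟨Finset.mem_univ _, ?_⟩
            simpa [← he2'] using heL
          · simp [← he2']
      rw [hbij, List.toFinset_card_of_nodup (hnd.filter _),
        ← List.countP_eq_length_filter]
      have hcnt : L.countP (fun e => e.2 == v.val)
          = edgesD.countP (fun ed => ed.1.2 == v.val) := by
        rw [hLdef, List.countP_map]
        rfl
      rw [hcnt]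
      exact hdegB v.val (List.mem_range.mpr (by omega)) hv
  refine ⟨Fin n, Finite.of_fintype _, G,
    {v : Fin n | v.val < p}, {v : Fin n | p ≤ v.val}, ?_, ?_, ?_, ?_, ?_, ?_, ?_, ?_⟩
  · rw [Set.disjoint_left]
    intro v hv hv'
    simp only [Set.mem_setOf_eq] at hv hv'
    omega
  · ext v; simp only [Set.mem_union, Set.mem_setOf_eq, Set.mem_univ, iff_true]; omega
  · have hrange : {v : Fin n | v.val < p} =
        Set.range (fun i : Fin p => (⟨i.val, by omega⟩ : Fin n)) := by
      ext v
      simp only [Set.mem_setOf_eq, Set.mem_range]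
      constructor
      · intro hv; exact ⟨⟨v.val, hv⟩, Fin.ext rfl⟩
      · rintro ⟨i, rfl⟩; exact i.isLt
    rw [hrange, ← Set.image_univ, Set.ncard_image_of_injective _
      (fun i j h => by
        have := congrArg Fin.val h
        simp only at this
        exact Fin.ext this), Set.ncard_univ]
    simp [Nat.card_eq_fintype_card]
  · have hrange : {v : Fin n | p ≤ v.val} =
        Set.range (fun i : Fin q => (⟨p + i.val, by omega⟩ : Fin n)) := by
      ext v
      simp only [Set.mem_setOf_eq, Set.mem_range]
      constructor
      · intro hv
        refine ⟨⟨v.val - p, by omega⟩, Fin.ext ?_⟩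
        simp only
        omega
      · rintro ⟨i, rfl⟩; simp
    rw [hrange, ← Set.image_univ, Set.ncard_image_of_injective _
      (fun i j h => by
        have := congrArg Fin.val h
        simp only at this
        exact Fin.ext (by omega)), Set.ncard_univ]
    simp [Nat.card_eq_fintype_card]
  · intro u v h
    rw [hAdj] at h
    rcases h.2 with hm | hm
    · obtain ⟨h1, h2, -⟩ := hE _ hm
      exact Or.inl ⟨h1, h2⟩
    · obtain ⟨h1, h2, -⟩ := hE _ hm
      exact Or.inr ⟨h2, h1⟩
  · intro v hv
    simp only [Set.mem_setOf_eq] at hv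
    rw [hcard v, if_pos hv]
  · intro v hv
    simp only [Set.mem_setOf_eq] at hv
    rw [hcard v, if_neg (by omega)]
  · -- the plane embedding
    refine ⟨⟨bpos c, hposinj, fun u v _ t => seg (bpos c u) (bpos c v) ↑t,
      ?_, ?_, ?_, ?_, ?_, ?_, ?_⟩⟩
    · intro u v h
      exact (continuous_const.add (continuous_subtype_val.mul continuous_const)).prodMk
        (continuous_const.add (continuous_subtype_val.mul continuous_const))
    · intro u v h t₁ t₂ hseg
      exact Subtype.ext (seg_inj _ _ (hposne h.ne) hseg)
    · intro u v h
      show seg (bpos c u) (bpos c v) ((0 : unitInterval) : ℝ) = bpos c u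
      have h0 : ((0 : unitInterval) : ℝ) = 0 := rfl
      rw [h0, seg_zero]
    · intro u v h
      show seg (bpos c u) (bpos c v) ((1 : unitInterval) : ℝ) = bpos c v
      have h1 : ((1 : unitInterval) : ℝ) = 1 := rfl
      rw [h1, seg_one]
    · intro u v h t
      show seg (bpos c v) (bpos c u) ((unitInterval.symm t : unitInterval) : ℝ) = _
      rw [unitInterval.coe_symm_eq]
      exact seg_symm _ _ _
    · -- arc_vertex
      intro u v h t ⟨w, hw⟩
      by_cases hwu : w = u
      · subst hwu
        left
        exact Subtype.ext (seg_eq_left _ _ (hposne h.ne) hw)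
      · by_cases hwv : w = v
        · subst hwv
          right
          exact Subtype.ext (seg_eq_right _ _ (hposne h.ne) hw)
        · exfalso
          rw [hAdj] at h
          rcases h.2 with hm | hm
          · have hD : detZ (c u.val) (c v.val) (c w.val) ≠ 0 :=
              hgen _ hm w (fun hc => hwu (Fin.ext hc)) (fun hc => hwv (Fin.ext hc))
            have hDR : detR (bpos c u) (bpos c v) (bpos c w) ≠ 0 := by
              rw [bpos, bpos, bpos, detR_cast]
              exact_mod_cast hD
            rw [← hw] at hDR
            exact hDR (detR_seg_self _ _ _)
          · have hD : detZ (c v.val) (c u.val) (c w.val) ≠ 0 :=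
              hgen _ hm w (fun hc => hwv (Fin.ext hc)) (fun hc => hwu (Fin.ext hc))
            have hDR : detR (bpos c v) (bpos c u) (bpos c w) ≠ 0 := by
              rw [bpos, bpos, bpos, detR_cast]
              exact_mod_cast hD
            rw [← hw] at hDR
            apply hDR
            rw [detR_swap]
            rw [detR_seg_self]
            ring
    · -- arc_disj
      intro u v x y h h' hs t₁ t₂ heq
      have ht₁0 : (0:ℝ) ≤ ↑t₁ := t₁.2.1
      have ht₁1 : (t₁:ℝ) ≤ 1 := t₁.2.2
      have ht₂0 : (0:ℝ) ≤ ↑t₂ := t₂.2.1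
      have ht₂1 : (t₂:ℝ) ≤ 1 := t₂.2.2
      rw [hAdj] at h h'
      rcases h.2 with hm | hm <;> rcases h'.2 with hm' | hm'
      · exact key hE hgen hside u v x y hm hm'
          (fun ⟨h1, h2⟩ => hs (by rw [h1, h2])) _ _ ht₁0 ht₁1 ht₂0 ht₂1 heq
      · rw [← seg_symm (bpos c x) (bpos c y) ↑t₂] at heq
        exact key hE hgen hside u v y x hm hm'
          (fun ⟨h1, h2⟩ => hs (by rw [h1, h2]; exact Sym2.eq_swap)) _ _
          ht₁0 ht₁1 (by linarith) (by linarith) heq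
      · rw [← seg_symm (bpos c u) (bpos c v) ↑t₁] at heq ⊢
        exact key hE hgen hside v u x y hm hm'
          (fun ⟨h1, h2⟩ => hs (by rw [h1, h2]; exact Sym2.eq_swap)) _ _
          (by linarith) (by linarith) ht₂0 ht₂1 heq
      · rw [← seg_symm (bpos c u) (bpos c v) ↑t₁] at heq ⊢
        rw [← seg_symm (bpos c x) (bpos c y) ↑t₂] at heq
        exact key hE hgen hside v u y x hm hm'
          (fun ⟨h1, h2⟩ => hs (by rw [h1, h2])) _ _
          (by linarith) (by linarith) (by linarith) (by linarith) heq

end PlanarAux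
namespace PlanarAux

/-- squish ℝ into (-1,1) -/
noncomputable def squish (x : ℝ) : ℝ := x / (1 + |x|)

theorem one_add_abs_pos (x : ℝ) : 0 < 1 + |x| := by positivity

theorem abs_squish_lt_one (x : ℝ) : |squish x| < 1 := by
  rw [squish, abs_div, abs_of_pos (one_add_abs_pos x), div_lt_one (one_add_abs_pos x)]
  linarith

theorem squish_cont : Continuous squish :=
  continuous_id.div (continuous_const.add continuous_abs)
    (fun x => (one_add_abs_pos x).ne')

theorem squish_inj : Function.Injective squish := by
  intro x y h
  have hx := one_add_abs_pos x
  have hy := one_add_abs_pos y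
  have habs : |x| / (1 + |x|) = |y| / (1 + |y|) := by
    rw [← abs_of_pos hx, ← abs_of_pos hy, ← abs_div, ← abs_div]
    exact congrArg abs h
  have h3 : |x| * (1 + |y|) = |y| * (1 + |x|) := by
    rw [div_eq_div_iff hx.ne' hy.ne'] at habs
    linarith
  have h4 : |x| = |y| := by nlinarith
  have h5 : x * (1 + |y|) = y * (1 + |x|) := by
    rw [squish, squish, div_eq_div_iff hx.ne' hy.ne'] at h
    linarith
  rw [h4] at h5
  exact mul_right_cancel₀ hy.ne' h5

/-- first component embedding into (-1,1)² -/
noncomputable def emb1 (z : ℝ × ℝ) : ℝ × ℝ := (squish z.1, squish z.2)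
/-- second component embedding into (3,5)×(-1,1) -/
noncomputable def emb2 (z : ℝ × ℝ) : ℝ × ℝ := (squish z.1 + 4, squish z.2)

theorem emb1_inj : Function.Injective emb1 := by
  intro z w h
  simp only [emb1, Prod.mk.injEq] at h
  exact Prod.ext (squish_inj h.1) (squish_inj h.2)

theorem emb2_inj : Function.Injective emb2 := by
  intro z w h
  simp only [emb2, Prod.mk.injEq, add_left_inj] at h
  exact Prod.ext (squish_inj h.1) (squish_inj h.2)

theorem emb1_cont : Continuous emb1 :=
  (squish_cont.comp continuous_fst).prodMk (squish_cont.comp continuous_snd)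

theorem emb2_cont : Continuous emb2 :=
  ((squish_cont.comp continuous_fst).add continuous_const).prodMk
    (squish_cont.comp continuous_snd)

theorem emb_ne (z w : ℝ × ℝ) : emb1 z ≠ emb2 w := by
  intro h
  have h1 := congrArg Prod.fst h
  simp only [emb1, emb2] at h1
  have b1 := abs_lt.mp (abs_squish_lt_one z.1)
  have b2 := abs_lt.mp (abs_squish_lt_one w.1)
  linarith [h1, b1.1, b1.2, b2.1, b2.2]

/-- disjoint union of two simple graphs -/
def sumGraph {V₁ V₂ : Type} (G₁ : SimpleGraph V₁) (G₂ : SimpleGraph V₂) :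
    SimpleGraph (V₁ ⊕ V₂) where
  Adj s t := match s, t with
    | .inl a, .inl b => G₁.Adj a b
    | .inr a, .inr b => G₂.Adj a b
    | _, _ => False
  symm := by
    constructor
    rintro (a | a) (b | b) h
    · exact h.symm
    · exact h.elim
    · exact h.elim
    · exact h.symm
  loopless := by
    constructor
    rintro (a | a) h
    · exact G₁.loopless.irrefl a h
    · exact G₂.loopless.irrefl a h

noncomputable def sumArc {V₁ V₂ : Type} {G₁ : SimpleGraph V₁} {G₂ : SimpleGraph V₂}
    (E₁ : PlaneEmb G₁) (E₂ : PlaneEmb G₂) :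
    ∀ ⦃s t : V₁ ⊕ V₂⦄, (sumGraph G₁ G₂).Adj s t → unitInterval → ℝ × ℝ
  | .inl _, .inl _, h, τ => emb1 (E₁.arc h τ)
  | .inr _, .inr _, h, τ => emb2 (E₂.arc h τ)
  | .inl _, .inr _, h, _ => h.elim
  | .inr _, .inl _, h, _ => h.elim

theorem sym2_ne_of_inl {V₁ V₂ : Type} {u v x y : V₁}
    (h : s(Sum.inl u, Sum.inl v) ≠ s((Sum.inl x : V₁ ⊕ V₂), Sum.inl y)) :
    s(u, v) ≠ s(x, y) := by
  intro hc
  apply h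
  rcases Sym2.eq_iff.mp hc with ⟨h1, h2⟩ | ⟨h1, h2⟩
  · rw [h1, h2]
  · rw [h1, h2]; exact Sym2.eq_swap

theorem sym2_ne_of_inr {V₁ V₂ : Type} {u v x y : V₂}
    (h : s(Sum.inr u, Sum.inr v) ≠ s((Sum.inr x : V₁ ⊕ V₂), Sum.inr y)) :
    s(u, v) ≠ s(x, y) := by
  intro hc
  apply h
  rcases Sym2.eq_iff.mp hc with ⟨h1, h2⟩ | ⟨h1, h2⟩
  · rw [h1, h2]
  · rw [h1, h2]; exact Sym2.eq_swap

theorem planarPair_union {a b p q p' q' : ℕ}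
    (h1 : PlanarPair a p b q) (h2 : PlanarPair a p' b q') :
    PlanarPair a (p + p') b (q + q') := by
  obtain ⟨V₁, hf₁, G₁, A₁, B₁, hd₁, hu₁, hca₁, hcb₁, hbip₁, hdA₁, hdB₁, ⟨E₁⟩⟩ := h1
  obtain ⟨V₂, hf₂, G₂, A₂, B₂, hd₂, hu₂, hca₂, hcb₂, hbip₂, hdA₂, hdB₂, ⟨E₂⟩⟩ := h2
  haveI := hf₁
  haveI := hf₂
  haveI : Finite (V₁ ⊕ V₂) := inferInstance
  refine ⟨V₁ ⊕ V₂, inferInstance, sumGraph G₁ G₂,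
    Sum.inl '' A₁ ∪ Sum.inr '' A₂, Sum.inl '' B₁ ∪ Sum.inr '' B₂, ?_, ?_, ?_, ?_, ?_, ?_, ?_, ?_⟩
  · rw [Set.disjoint_left]
    rintro z (⟨v, hv, rfl⟩ | ⟨v, hv, rfl⟩) (⟨w, hw, hz⟩ | ⟨w, hw, hz⟩)
    · rw [Sum.inl.injEq] at hz; subst hz
      exact (Set.disjoint_left.mp hd₁) hv hw
    · exact nomatch hz
    · exact nomatch hz
    · rw [Sum.inr.injEq] at hz; subst hz
      exact (Set.disjoint_left.mp hd₂) hv hw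
  · ext z
    simp only [Set.mem_union, Set.mem_image, Set.mem_univ, iff_true]
    cases z with
    | inl v =>
      have : v ∈ A₁ ∪ B₁ := by rw [hu₁]; trivial
      rcases this with hv | hv
      · exact Or.inl (Or.inl ⟨v, hv, rfl⟩)
      · exact Or.inr (Or.inl ⟨v, hv, rfl⟩)
    | inr v =>
      have : v ∈ A₂ ∪ B₂ := by rw [hu₂]; trivial
      rcases this with hv | hv
      · exact Or.inl (Or.inr ⟨v, hv, rfl⟩)
      · exact Or.inr (Or.inr ⟨v, hv, rfl⟩)
  · rw [Set.ncard_union_eq (by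
      rw [Set.disjoint_left]
      rintro z ⟨v, hv, rfl⟩ ⟨w, hw, hz⟩
      exact nomatch hz) (Set.toFinite _) (Set.toFinite _),
      Set.ncard_image_of_injective _ Sum.inl_injective,
      Set.ncard_image_of_injective _ Sum.inr_injective, hca₁, hca₂]
  · rw [Set.ncard_union_eq (by
      rw [Set.disjoint_left]
      rintro z ⟨v, hv, rfl⟩ ⟨w, hw, hz⟩
      exact nomatch hz) (Set.toFinite _) (Set.toFinite _),
      Set.ncard_image_of_injective _ Sum.inl_injective,
      Set.ncard_image_of_injective _ Sum.inr_injective, hcb₁, hcb₂]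
  · rintro (u | u) (v | v) hadj
    · rcases hbip₁ hadj with ⟨hu, hv⟩ | ⟨hu, hv⟩
      · exact Or.inl ⟨Or.inl ⟨u, hu, rfl⟩, Or.inl ⟨v, hv, rfl⟩⟩
      · exact Or.inr ⟨Or.inl ⟨u, hu, rfl⟩, Or.inl ⟨v, hv, rfl⟩⟩
    · exact hadj.elim
    · exact hadj.elim
    · rcases hbip₂ hadj with ⟨hu, hv⟩ | ⟨hu, hv⟩
      · exact Or.inl ⟨Or.inr ⟨u, hu, rfl⟩, Or.inr ⟨v, hv, rfl⟩⟩
      · exact Or.inr ⟨Or.inr ⟨u, hu, rfl⟩, Or.inr ⟨v, hv, rfl⟩⟩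
  · rintro z (⟨v, hv, rfl⟩ | ⟨v, hv, rfl⟩)
    · have hset : (sumGraph G₁ G₂).neighborSet (Sum.inl v) =
          Sum.inl '' (G₁.neighborSet v) := by
        ext w
        cases w with
        | inl w => simp [sumGraph, SimpleGraph.neighborSet]
        | inr w =>
          simp only [SimpleGraph.mem_neighborSet, Set.mem_image]
          constructor
          · intro hh; exact hh.elim
          · rintro ⟨x, hx, hc⟩; exact nomatch hc
      rw [hset, Set.ncard_image_of_injective _ Sum.inl_injective]
      exact hdA₁ v hv
    · have hset : (sumGraph G₁ G₂).neighborSet (Sum.inr v) =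
          Sum.inr '' (G₂.neighborSet v) := by
        ext w
        cases w with
        | inl w =>
          simp only [SimpleGraph.mem_neighborSet, Set.mem_image]
          constructor
          · intro hh; exact hh.elim
          · rintro ⟨x, hx, hc⟩; exact nomatch hc
        | inr w => simp [sumGraph, SimpleGraph.neighborSet]
      rw [hset, Set.ncard_image_of_injective _ Sum.inr_injective]
      exact hdA₂ v hv
  · rintro z (⟨v, hv, rfl⟩ | ⟨v, hv, rfl⟩)
    · have hset : (sumGraph G₁ G₂).neighborSet (Sum.inl v) =
          Sum.inl '' (G₁.neighborSet v) := by
        ext w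
        cases w with
        | inl w => simp [sumGraph, SimpleGraph.neighborSet]
        | inr w =>
          simp only [SimpleGraph.mem_neighborSet, Set.mem_image]
          constructor
          · intro hh; exact hh.elim
          · rintro ⟨x, hx, hc⟩; exact nomatch hc
      rw [hset, Set.ncard_image_of_injective _ Sum.inl_injective]
      exact hdB₁ v hv
    · have hset : (sumGraph G₁ G₂).neighborSet (Sum.inr v) =
          Sum.inr '' (G₂.neighborSet v) := by
        ext w
        cases w with
        | inl w =>
          simp only [SimpleGraph.mem_neighborSet, Set.mem_image]
          constructor
          · intro hh; exact hh.elim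
          · rintro ⟨x, hx, hc⟩; exact nomatch hc
        | inr w => simp [sumGraph, SimpleGraph.neighborSet]
      rw [hset, Set.ncard_image_of_injective _ Sum.inr_injective]
      exact hdB₂ v hv
  · -- the embedding
    refine ⟨⟨Sum.elim (emb1 ∘ E₁.pos) (emb2 ∘ E₂.pos), ?_, sumArc E₁ E₂,
      ?_, ?_, ?_, ?_, ?_, ?_, ?_⟩⟩
    · rintro (u | u) (v | v) h
      · simp only [Sum.elim_inl, Function.comp_apply] at h
        rw [E₁.pos_inj (emb1_inj h)]
      · exact absurd h (emb_ne _ _)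
      · exact absurd h.symm (emb_ne _ _)
      · simp only [Sum.elim_inr, Function.comp_apply] at h
        rw [E₂.pos_inj (emb2_inj h)]
    · rintro (u | u) (v | v) h
      · exact emb1_cont.comp (E₁.arc_cont h)
      · exact h.elim
      · exact h.elim
      · exact emb2_cont.comp (E₂.arc_cont h)
    · rintro (u | u) (v | v) h t₁ t₂ hh
      · exact E₁.arc_inj h (emb1_inj hh)
      · exact h.elim
      · exact h.elim
      · exact E₂.arc_inj h (emb2_inj hh)
    · rintro (u | u) (v | v) h
      · exact congrArg emb1 (E₁.arc_zero h)
      · exact h.elim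
      · exact h.elim
      · exact congrArg emb2 (E₂.arc_zero h)
    · rintro (u | u) (v | v) h
      · exact congrArg emb1 (E₁.arc_one h)
      · exact h.elim
      · exact h.elim
      · exact congrArg emb2 (E₂.arc_one h)
    · rintro (u | u) (v | v) h t
      · exact congrArg emb1 (E₁.arc_symm h t)
      · exact h.elim
      · exact h.elim
      · exact congrArg emb2 (E₂.arc_symm h t)
    · rintro (u | u) (v | v) h t hex
      · obtain ⟨w, hw⟩ := hex
        cases w with
        | inl w =>
          simp only [Sum.elim_inl, Function.comp_apply] at hw
          exact E₁.arc_vertex h t ⟨w, emb1_inj hw⟩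
        | inr w => exact absurd hw (emb_ne _ _)
      · exact h.elim
      · exact h.elim
      · obtain ⟨w, hw⟩ := hex
        cases w with
        | inl w =>
          simp only [Sum.elim_inl, Function.comp_apply] at hw
          exact absurd hw.symm (emb_ne _ _)
        | inr w =>
          simp only [Sum.elim_inr, Function.comp_apply] at hw
          exact E₂.arc_vertex h t ⟨w, emb2_inj hw⟩
    · rintro (u | u) (v | v) (x | x) (y | y) h h' hs t₁ t₂ heq
      all_goals first
        | exact h.elim
        | exact h'.elim
        | skip
      · obtain ⟨w, hw⟩ := E₁.arc_disj h h' (sym2_ne_of_inl hs) t₁ t₂ (emb1_inj heq)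
        exact ⟨Sum.inl w, congrArg emb1 hw⟩
      · exact absurd heq (emb_ne _ _)
      · exact absurd heq.symm (emb_ne _ _)
      · obtain ⟨w, hw⟩ := E₂.arc_disj h h' (sym2_ne_of_inr hs) t₁ t₂ (emb2_inj heq)
        exact ⟨Sum.inr w, congrArg emb2 hw⟩

end PlanarAux
namespace PlanarAux

def coords4 : List (ℤ × ℤ) := [(2000, -1), (856, 912), (1215, 1141), (1252, 709), (1094, 1318), (1235, 954), (1040, 1279), (1078, 851), (1136, 1113), (1079, 1076), (1090, 973), (1145, 780), (1249, 849), (1171, 1030), (1116, 1071), (1131, 946), (1158, 882), (1186, 904), (1168, 973), (1138, 999), (1001, 1730), (1106, 614), (1356, 775), (1166, 1112), (1095, 1172), (1037, 1030), (1118, 889), (1198, 824), (1204, 939), (1148, 1036), (1113, 1011), (1156, 941)]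

def c4 (k : ℕ) : ℤ × ℤ := coords4.getD k (0, 0)

def edgesD4 : List ((ℕ × ℕ) × ((ℤ × ℤ) × (ℤ × ℤ))) := [((0, 20), (((2000, -1) : ℤ × ℤ), ((1001, 1730) : ℤ × ℤ))), ((0, 21), (((2000, -1) : ℤ × ℤ), ((1106, 614) : ℤ × ℤ))), ((0, 22), (((2000, -1) : ℤ × ℤ), ((1356, 775) : ℤ × ℤ))), ((1, 20), (((856, 912) : ℤ × ℤ), ((1001, 1730) : ℤ × ℤ))), ((1, 21), (((856, 912) : ℤ × ℤ), ((1106, 614) : ℤ × ℤ))), ((1, 25), (((856, 912) : ℤ × ℤ), ((1037, 1030) : ℤ × ℤ))), ((2, 20), (((1215, 1141) : ℤ × ℤ), ((1001, 1730) : ℤ × ℤ))), ((2, 22), (((1215, 1141) : ℤ × ℤ), ((1356, 775) : ℤ × ℤ))), ((2, 23), (((1215, 1141) : ℤ × ℤ), ((1166, 1112) : ℤ × ℤ))), ((3, 21), (((1252, 709) : ℤ × ℤ), ((1106, 614) : ℤ × ℤ))), ((3, 22), (((1252, 709) : ℤ × ℤ), ((1356, 775) : ℤ × ℤ))), ((3,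 27), (((1252, 709) : ℤ × ℤ), ((1198, 824) : ℤ × ℤ))), ((4, 20), (((1094, 1318) : ℤ × ℤ), ((1001, 1730) : ℤ × ℤ))), ((4, 23), (((1094, 1318) : ℤ × ℤ), ((1166, 1112) : ℤ × ℤ))), ((4, 24), (((1094, 1318) : ℤ × ℤ), ((1095, 1172) : ℤ × ℤ))), ((5, 22), (((1235, 954) : ℤ × ℤ), ((1356, 775) : ℤ × ℤ))), ((5, 23), (((1235, 954) : ℤ × ℤ), ((1166, 1112) : ℤ × ℤ))), ((5, 28), (((1235, 954) : ℤ × ℤ), ((1204, 939) : ℤ × ℤ))), ((6, 20), (((1040, 1279) : ℤ × ℤ), ((1001, 1730) : ℤ × ℤ))), ((6, 24), (((1040, 1279) : ℤ × ℤ), ((1095, 1172) : ℤ × ℤ))), ((6, 25), (((1040, 1279) : ℤ × ℤ), ((1037, 1030) : ℤ × ℤ))), ((7, 21), (((1078, 851) : ℤ × ℤ), ((1106, 614) : ℤ × ℤ))), ((7, 25), (((1078, 851) : ℤ × ℤ), ((1037, 1030) : ℤ × ℤ))), ((7, 26), (((1078, 851) : ℤ × ℤ), ((1118, 889) : ℤ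 × ℤ))), ((8, 23), (((1136, 1113) : ℤ × ℤ), ((1166, 1112) : ℤ × ℤ))), ((8, 24), (((1136, 1113) : ℤ × ℤ), ((1095, 1172) : ℤ × ℤ))), ((8, 29), (((1136, 1113) : ℤ × ℤ), ((1148, 1036) : ℤ × ℤ))), ((9, 24), (((1079, 1076) : ℤ × ℤ), ((1095, 1172) : ℤ × ℤ))), ((9, 25), (((1079, 1076) : ℤ × ℤ), ((1037, 1030) : ℤ × ℤ))), ((9, 30), (((1079, 1076) : ℤ × ℤ), ((1113, 1011) : ℤ × ℤ))), ((10, 25), (((1090, 973) : ℤ × ℤ), ((1037, 1030) : ℤ × ℤ))), ((10, 26), (((1090, 973) : ℤ × ℤ), ((1118, 889) : ℤ × ℤ))), ((10, 30), (((1090, 973) : ℤ × ℤ), ((1113, 1011) : ℤ × ℤ))), ((11, 21), (((1145, 780) : ℤ × ℤ), ((1106, 614) : ℤ × ℤ))), ((11, 26), (((1145, 780) : ℤ × ℤ), ((1118, 889) : ℤ × ℤ))), ((11, 27), (((1145, 780) : ℤ × ℤ), ((1198, 824) : ℤ × ℤ))), ((12, 22), (((1249, 849) : ℤ × ℤ),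 ((1356, 775) : ℤ × ℤ))), ((12, 27), (((1249, 849) : ℤ × ℤ), ((1198, 824) : ℤ × ℤ))), ((12, 28), (((1249, 849) : ℤ × ℤ), ((1204, 939) : ℤ × ℤ))), ((13, 23), (((1171, 1030) : ℤ × ℤ), ((1166, 1112) : ℤ × ℤ))), ((13, 28), (((1171, 1030) : ℤ × ℤ), ((1204, 939) : ℤ × ℤ))), ((13, 29), (((1171, 1030) : ℤ × ℤ), ((1148, 1036) : ℤ × ℤ))), ((14, 24), (((1116, 1071) : ℤ × ℤ), ((1095, 1172) : ℤ × ℤ))), ((14, 29), (((1116, 1071) : ℤ × ℤ), ((1148, 1036) : ℤ × ℤ))), ((14, 30), (((1116, 1071) : ℤ × ℤ), ((1113, 1011) : ℤ × ℤ))), ((15, 26), (((1131, 946) : ℤ × ℤ), ((1118, 889) : ℤ × ℤ))), ((15, 30), (((1131, 946) : ℤ × ℤ), ((1113, 1011) : ℤ × ℤ))), ((15, 31), (((1131, 946) : ℤ × ℤ), ((1156, 941) : ℤ × ℤ))), ((16, 26), (((1158, 882) : ℤ × ℤ), ((1118, 889) : ℤ × ℤ))), ((16, 27), (((1158, 882)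 : ℤ × ℤ), ((1198, 824) : ℤ × ℤ))), ((16, 31), (((1158, 882) : ℤ × ℤ), ((1156, 941) : ℤ × ℤ))), ((17, 27), (((1186, 904) : ℤ × ℤ), ((1198, 824) : ℤ × ℤ))), ((17, 28), (((1186, 904) : ℤ × ℤ), ((1204, 939) : ℤ × ℤ))), ((17, 31), (((1186, 904) : ℤ × ℤ), ((1156, 941) : ℤ × ℤ))), ((18, 28), (((1168, 973) : ℤ × ℤ), ((1204, 939) : ℤ × ℤ))), ((18, 29), (((1168, 973) : ℤ × ℤ), ((1148, 1036) : ℤ × ℤ))), ((18, 31), (((1168, 973) : ℤ × ℤ), ((1156, 941) : ℤ × ℤ))), ((19, 29), (((1138, 999) : ℤ × ℤ), ((1148, 1036) : ℤ × ℤ))), ((19, 30), (((1138, 999) : ℤ × ℤ), ((1113, 1011) : ℤ × ℤ))), ((19, 31), (((1138, 999) : ℤ × ℤ), ((1156, 941) : ℤ × ℤ)))]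

def verts4 : List (ℕ × (ℤ × ℤ)) := [(0, ((2000, -1) : ℤ × ℤ)), (1, ((856, 912) : ℤ × ℤ)), (2, ((1215, 1141) : ℤ × ℤ)), (3, ((1252, 709) : ℤ × ℤ)), (4, ((1094, 1318) : ℤ × ℤ)), (5, ((1235, 954) : ℤ × ℤ)), (6, ((1040, 1279) : ℤ × ℤ)), (7, ((1078, 851) : ℤ × ℤ)), (8, ((1136, 1113) : ℤ × ℤ)), (9, ((1079, 1076) : ℤ × ℤ)), (10, ((1090, 973) : ℤ × ℤ)), (11, ((1145, 780) : ℤ × ℤ)), (12, ((1249, 849) : ℤ × ℤ)), (13, ((1171, 1030) : ℤ × ℤ)), (14, ((1116, 1071) : ℤ × ℤ)), (15, ((1131, 946) : ℤ × ℤ)), (16, ((1158, 882) : ℤ × ℤ)), (17, ((1186, 904) : ℤ × ℤ)), (18, ((1168, 973) : ℤ × ℤ)), (19, ((1138, 999) : ℤ × ℤ)), (20, ((1001, 1730) : ℤ × ℤ)), (21, ((1106, 614) : ℤ × ℤ)), (22, ((1356, 775) : ℤ × ℤ)), (23, ((1166, 1112) : ℤ × ℤ)), (24, ((1095, 1172)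 : ℤ × ℤ)), (25, ((1037, 1030) : ℤ × ℤ)), (26, ((1118, 889) : ℤ × ℤ)), (27, ((1198, 824) : ℤ × ℤ)), (28, ((1204, 939) : ℤ × ℤ)), (29, ((1148, 1036) : ℤ × ℤ)), (30, ((1113, 1011) : ℤ × ℤ)), (31, ((1156, 941) : ℤ × ℤ))]

def coords6 : List (ℤ × ℤ) := [(2000, -1), (679, 896), (681, 442), (1152, 1076), (1151, 544), (1007, 1257), (1129, 834), (919, 1238), (771, 805), (999, 1010), (890, 998), (844, 890), (773, 707), (866, 825), (942, 968), (920, 857), (840, 751), (771, 626), (917, 527), (1040, 902), (921, 729), (1004, 801), (867, 710), (845, 643), (1037, 710), (894, 613), (1004, 546), (1131, 699), (999, 646), (939, 663), (999, 1731), (666, 627), (1000, 400), (1271, 674), (1064, 1021), (951, 1096), (827, 976), (819, 794), (893, 909), (978, 907), (883, 774), (817, 689), (825, 573), (981, 712), (1068, 788), (891, 673), (951, 598), (1064, 632)]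

def c6 (k : ℕ) : ℤ × ℤ := coords6.getD k (0, 0)

def edgesD6 : List ((ℕ × ℕ) × ((ℤ × ℤ) × (ℤ × ℤ))) := [((0, 30), (((2000, -1) : ℤ × ℤ), ((999, 1731) : ℤ × ℤ))), ((0, 32), (((2000, -1) : ℤ × ℤ), ((1000, 400) : ℤ × ℤ))), ((0, 33), (((2000, -1) : ℤ × ℤ), ((1271, 674) : ℤ × ℤ))), ((1, 30), (((679, 896) : ℤ × ℤ), ((999, 1731) : ℤ × ℤ))), ((1, 31), (((679, 896) : ℤ × ℤ), ((666, 627) : ℤ × ℤ))), ((1, 36), (((679, 896) : ℤ × ℤ), ((827, 976) : ℤ × ℤ))), ((2, 31), (((681, 442) : ℤ × ℤ), ((666, 627) : ℤ × ℤ))), ((2, 32), (((681, 442) : ℤ × ℤ), ((1000, 400) : ℤ × ℤ))), ((2, 42), (((681, 442) : ℤ × ℤ), ((825, 573) : ℤ × ℤ))), ((3, 30), (((1152, 1076) : ℤ × ℤ), ((999, 1731) : ℤ × ℤ))), ((3, 33), (((1152, 1076) : ℤ × ℤ), ((1271, 674) : ℤ × ℤ))), ((3, 34), (((1152, 1076)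 : ℤ × ℤ), ((1064, 1021) : ℤ × ℤ))), ((4, 32), (((1151, 544) : ℤ × ℤ), ((1000, 400) : ℤ × ℤ))), ((4, 33), (((1151, 544) : ℤ × ℤ), ((1271, 674) : ℤ × ℤ))), ((4, 47), (((1151, 544) : ℤ × ℤ), ((1064, 632) : ℤ × ℤ))), ((5, 30), (((1007, 1257) : ℤ × ℤ), ((999, 1731) : ℤ × ℤ))), ((5, 34), (((1007, 1257) : ℤ × ℤ), ((1064, 1021) : ℤ × ℤ))), ((5, 35), (((1007, 1257) : ℤ × ℤ), ((951, 1096) : ℤ × ℤ))), ((6, 33), (((1129, 834) : ℤ × ℤ), ((1271, 674) : ℤ × ℤ))), ((6, 34), (((1129, 834) : ℤ × ℤ), ((1064, 1021) : ℤ × ℤ))), ((6, 44), (((1129, 834) : ℤ × ℤ), ((1068, 788) : ℤ × ℤ))), ((7, 30), (((919, 1238) : ℤ × ℤ), ((999, 1731) : ℤ × ℤ))), ((7, 35), (((919, 1238) : ℤ × ℤ), ((951, 1096) : ℤ × ℤ))), ((7, 36), (((919, 1238) : ℤ × ℤ), ((827, 976) : ℤ × ℤ))), ((8, 31), (((771,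 805) : ℤ × ℤ), ((666, 627) : ℤ × ℤ))), ((8, 36), (((771, 805) : ℤ × ℤ), ((827, 976) : ℤ × ℤ))), ((8, 37), (((771, 805) : ℤ × ℤ), ((819, 794) : ℤ × ℤ))), ((9, 34), (((999, 1010) : ℤ × ℤ), ((1064, 1021) : ℤ × ℤ))), ((9, 35), (((999, 1010) : ℤ × ℤ), ((951, 1096) : ℤ × ℤ))), ((9, 39), (((999, 1010) : ℤ × ℤ), ((978, 907) : ℤ × ℤ))), ((10, 35), (((890, 998) : ℤ × ℤ), ((951, 1096) : ℤ × ℤ))), ((10, 36), (((890, 998) : ℤ × ℤ), ((827, 976) : ℤ × ℤ))), ((10, 38), (((890, 998) : ℤ × ℤ), ((893, 909) : ℤ × ℤ))), ((11, 36), (((844, 890) : ℤ × ℤ), ((827, 976) : ℤ × ℤ))), ((11, 37), (((844, 890) : ℤ × ℤ), ((819, 794) : ℤ × ℤ))), ((11, 38), (((844, 890) : ℤ × ℤ), ((893, 909) : ℤ × ℤ))), ((12, 31), (((773, 707) : ℤ × ℤ), ((666, 627) : ℤ × ℤ))), ((12, 37), (((773, 707) : ℤ × ℤ), ((819, 794)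 : ℤ × ℤ))), ((12, 41), (((773, 707) : ℤ × ℤ), ((817, 689) : ℤ × ℤ))), ((13, 37), (((866, 825) : ℤ × ℤ), ((819, 794) : ℤ × ℤ))), ((13, 38), (((866, 825) : ℤ × ℤ), ((893, 909) : ℤ × ℤ))), ((13, 40), (((866, 825) : ℤ × ℤ), ((883, 774) : ℤ × ℤ))), ((14, 35), (((942, 968) : ℤ × ℤ), ((951, 1096) : ℤ × ℤ))), ((14, 38), (((942, 968) : ℤ × ℤ), ((893, 909) : ℤ × ℤ))), ((14, 39), (((942, 968) : ℤ × ℤ), ((978, 907) : ℤ × ℤ))), ((15, 38), (((920, 857) : ℤ × ℤ), ((893, 909) : ℤ × ℤ))), ((15, 39), (((920, 857) : ℤ × ℤ), ((978, 907) : ℤ × ℤ))), ((15, 40), (((920, 857) : ℤ × ℤ), ((883, 774) : ℤ × ℤ))), ((16, 37), (((840, 751) : ℤ × ℤ), ((819, 794) : ℤ × ℤ))), ((16, 40), (((840, 751) : ℤ × ℤ), ((883, 774) : ℤ × ℤ))), ((16, 41), (((840, 751) : ℤ × ℤ), ((817, 689) : ℤ × ℤ))), ((17, 31), (((771, 626)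 : ℤ × ℤ), ((666, 627) : ℤ × ℤ))), ((17, 41), (((771, 626) : ℤ × ℤ), ((817, 689) : ℤ × ℤ))), ((17, 42), (((771, 626) : ℤ × ℤ), ((825, 573) : ℤ × ℤ))), ((18, 32), (((917, 527) : ℤ × ℤ), ((1000, 400) : ℤ × ℤ))), ((18, 42), (((917, 527) : ℤ × ℤ), ((825, 573) : ℤ × ℤ))), ((18, 46), (((917, 527) : ℤ × ℤ), ((951, 598) : ℤ × ℤ))), ((19, 34), (((1040, 902) : ℤ × ℤ), ((1064, 1021) : ℤ × ℤ))), ((19, 39), (((1040, 902) : ℤ × ℤ), ((978, 907) : ℤ × ℤ))), ((19, 44), (((1040, 902) : ℤ × ℤ), ((1068, 788) : ℤ × ℤ))), ((20, 40), (((921, 729) : ℤ × ℤ), ((883, 774) : ℤ × ℤ))), ((20, 43), (((921, 729) : ℤ × ℤ), ((981, 712) : ℤ × ℤ))), ((20, 45), (((921, 729) : ℤ × ℤ), ((891, 673) : ℤ × ℤ))), ((21, 39), (((1004, 801) : ℤ × ℤ), ((978, 907) : ℤ × ℤ))), ((21, 43), (((1004, 801) : ℤ × ℤ), ((981, 712)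 : ℤ × ℤ))), ((21, 44), (((1004, 801) : ℤ × ℤ), ((1068, 788) : ℤ × ℤ))), ((22, 40), (((867, 710) : ℤ × ℤ), ((883, 774) : ℤ × ℤ))), ((22, 41), (((867, 710) : ℤ × ℤ), ((817, 689) : ℤ × ℤ))), ((22, 45), (((867, 710) : ℤ × ℤ), ((891, 673) : ℤ × ℤ))), ((23, 41), (((845, 643) : ℤ × ℤ), ((817, 689) : ℤ × ℤ))), ((23, 42), (((845, 643) : ℤ × ℤ), ((825, 573) : ℤ × ℤ))), ((23, 45), (((845, 643) : ℤ × ℤ), ((891, 673) : ℤ × ℤ))), ((24, 43), (((1037, 710) : ℤ × ℤ), ((981, 712) : ℤ × ℤ))), ((24, 44), (((1037, 710) : ℤ × ℤ), ((1068, 788) : ℤ × ℤ))), ((24, 47), (((1037, 710) : ℤ × ℤ), ((1064, 632) : ℤ × ℤ))), ((25, 42), (((894, 613) : ℤ × ℤ), ((825, 573) : ℤ × ℤ))), ((25, 45), (((894, 613) : ℤ × ℤ), ((891, 673) : ℤ × ℤ))), ((25, 46), (((894, 613) : ℤ × ℤ), ((951, 598) : ℤ × ℤ))), ((26, 32), (((1004,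 546) : ℤ × ℤ), ((1000, 400) : ℤ × ℤ))), ((26, 46), (((1004, 546) : ℤ × ℤ), ((951, 598) : ℤ × ℤ))), ((26, 47), (((1004, 546) : ℤ × ℤ), ((1064, 632) : ℤ × ℤ))), ((27, 33), (((1131, 699) : ℤ × ℤ), ((1271, 674) : ℤ × ℤ))), ((27, 44), (((1131, 699) : ℤ × ℤ), ((1068, 788) : ℤ × ℤ))), ((27, 47), (((1131, 699) : ℤ × ℤ), ((1064, 632) : ℤ × ℤ))), ((28, 43), (((999, 646) : ℤ × ℤ), ((981, 712) : ℤ × ℤ))), ((28, 46), (((999, 646) : ℤ × ℤ), ((951, 598) : ℤ × ℤ))), ((28, 47), (((999, 646) : ℤ × ℤ), ((1064, 632) : ℤ × ℤ))), ((29, 43), (((939, 663) : ℤ × ℤ), ((981, 712) : ℤ × ℤ))), ((29, 45), (((939, 663) : ℤ × ℤ), ((891, 673) : ℤ × ℤ))), ((29, 46), (((939, 663) : ℤ × ℤ), ((951, 598) : ℤ × ℤ)))]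

def verts6 : List (ℕ × (ℤ × ℤ)) := [(0, ((2000, -1) : ℤ × ℤ)), (1, ((679, 896) : ℤ × ℤ)), (2, ((681, 442) : ℤ × ℤ)), (3, ((1152, 1076) : ℤ × ℤ)), (4, ((1151, 544) : ℤ × ℤ)), (5, ((1007, 1257) : ℤ × ℤ)), (6, ((1129, 834) : ℤ × ℤ)), (7, ((919, 1238) : ℤ × ℤ)), (8, ((771, 805) : ℤ × ℤ)), (9, ((999, 1010) : ℤ × ℤ)), (10, ((890, 998) : ℤ × ℤ)), (11, ((844, 890) : ℤ × ℤ)), (12, ((773, 707) : ℤ × ℤ)), (13, ((866, 825) : ℤ × ℤ)), (14, ((942, 968) : ℤ × ℤ)), (15, ((920, 857) : ℤ × ℤ)), (16, ((840, 751) : ℤ × ℤ)), (17, ((771, 626) : ℤ × ℤ)), (18, ((917, 527) : ℤ × ℤ)), (19, ((1040, 902) : ℤ × ℤ)), (20, ((921, 729) : ℤ × ℤ)), (21, ((1004, 801) : ℤ × ℤ)), (22, ((867, 710) : ℤ × ℤ)), (23, ((845, 643) : ℤ × ℤ)), (24, ((1037, 710) : ℤ × ℤ)), (25, ((894, 613)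 : ℤ × ℤ)), (26, ((1004, 546) : ℤ × ℤ)), (27, ((1131, 699) : ℤ × ℤ)), (28, ((999, 646) : ℤ × ℤ)), (29, ((939, 663) : ℤ × ℤ)), (30, ((999, 1731) : ℤ × ℤ)), (31, ((666, 627) : ℤ × ℤ)), (32, ((1000, 400) : ℤ × ℤ)), (33, ((1271, 674) : ℤ × ℤ)), (34, ((1064, 1021) : ℤ × ℤ)), (35, ((951, 1096) : ℤ × ℤ)), (36, ((827, 976) : ℤ × ℤ)), (37, ((819, 794) : ℤ × ℤ)), (38, ((893, 909) : ℤ × ℤ)), (39, ((978, 907) : ℤ × ℤ)), (40, ((883, 774) : ℤ × ℤ)), (41, ((817, 689) : ℤ × ℤ)), (42, ((825, 573) : ℤ × ℤ)), (43, ((981, 712) : ℤ × ℤ)), (44, ((1068, 788) : ℤ × ℤ)), (45, ((891, 673) : ℤ × ℤ)), (46, ((951, 598) : ℤ × ℤ)), (47, ((1064, 632) : ℤ × ℤ))]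


set_option maxHeartbeats 4000000 in
set_option maxRecDepth 100000 in
theorem base4 : PlanarPair 3 20 5 12 :=
  build 32 20 12 c4 edgesD4 verts4 (by norm_num) (by decide) (by decide)
    (by decide) (by decide) (by decide) (by decide) (by decide) (by decide) (by decide)


set_option maxHeartbeats 4000000 in
set_option maxRecDepth 100000 in
theorem base6 : PlanarPair 3 30 5 18 :=
  build 48 30 18 c6 edgesD6 verts6 (by norm_num) (by decide) (by decide)
    (by decide) (by decide) (by decide) (by decide) (by decide) (by decide) (by decide)


end PlanarAux

theorem planar_three_five_even (r : ℕ) (hr : 4 ≤ r) (hre : Even r) :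
    PlanarPair 3 (5 * r) 5 (3 * r) := by
  induction r using Nat.strong_induction_on with
  | _ r IH =>
    by_cases h4 : r = 4
    · subst h4
      have h : PlanarPair 3 20 5 12 := PlanarAux.base4
      convert h using 2
    · by_cases h6 : r = 6
      · subst h6
        have h : PlanarPair 3 30 5 18 := PlanarAux.base6
        convert h using 2
      · have hr8 : 8 ≤ r := by
          obtain ⟨k, hk⟩ := hre
          omega
        have hre' : Even (r - 4) := by
          obtain ⟨k, hk⟩ := hre
          exact ⟨k - 2, by omega⟩
        have h1 := IH (r - 4) (by omega) (by omega) hre'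
        have h2 := PlanarAux.planarPair_union PlanarAux.base4 h1
        have e1 : 20 + 5 * (r - 4) = 5 * r := by omega
        have e2 : 12 + 3 * (r - 4) = 3 * r := by omega
        rwa [e1, e2] at h2
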